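/- The number of permutations of [n] with exactly d cyclic descents equals n times the number of permutations of [n-1] with exactly d-1 (ordinary) descents. Equivalently, the cyclic Eulerian polynomial satisfies A_n^{(c)}(t) = n·A_{n-1}(t). -/

import Mathlib

open Finset
open scoped Classical

/-- The value `π(s)` (0-indexed) of a permutation of `Fin n`, as a natural number. -/
def aval (n : ℕ) (π : Equiv.Perm (Fin n)) (s : ℕ) : ℕ :=
  if h : s < n then (π ⟨s, h⟩ : ℕ) else s

/-- The descent set of `π ∈ S_n` (0-indexed positions `s` with `π(s) > π(s+1)`). -/
def desSetA (n : ℕ) (π : Equiv.Perm (Fin n)) : Finset ℕ :=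
  (Finset.range (n - 1)).filter (fun s => aval n π (s + 1) < aval n π s)

/-- The descent number of `π ∈ S_n`. -/
def desA (n : ℕ) (π : Equiv.Perm (Fin n)) : ℕ := (desSetA n π).card

/-- The cyclic descent number of `π ∈ S_n`: ordinary descents together with a
descent in the last position when `π(n) > π(1)` (0-indexed: `π(n-1) > π(0)`). -/
def cdesA (n : ℕ) (π : Equiv.Perm (Fin n)) : ℕ :=
  desA n π + (if aval n π 0 < aval n π (n - 1) then 1 else 0)

section aux
open Equiv
variable {m : ℕ}

/-- The extension of `σ ∈ S_m` to `S_{m+1}` fixing the last point. -/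
def wP (σ : Perm (Fin m)) : Perm (Fin (m+1)) :=
  finSuccEquivLast.permCongr.symm σ.optionCongr

@[simp] lemma wP_castSucc (σ : Perm (Fin m)) (j : Fin m) :
    wP σ j.castSucc = (σ j).castSucc := by
  simp [wP, Equiv.permCongr]

@[simp] lemma wP_last (σ : Perm (Fin m)) : wP σ (Fin.last m) = Fin.last m := by
  simp [wP, Equiv.permCongr]

/-- The number of cyclic descents, counted over `Fin` positions with wraparound. -/
noncomputable def cdF (π : Perm (Fin (m+1))) : ℕ :=
  (univ.filter (fun i : Fin (m+1) => π (i+1) < π i)).card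

/-- Indicator of a cyclic descent at a ℕ position. -/
noncomputable def F (π : Perm (Fin (m+1))) (s : ℕ) : ℕ :=
  if h : s < m+1 then (if π (⟨s, h⟩ + 1) < π ⟨s, h⟩ then 1 else 0) else 0

lemma cdF_eq_sum (π : Perm (Fin (m+1))) :
    cdF π = ∑ s ∈ Finset.range (m+1), F π s := by
  rw [cdF, Finset.card_filter]
  rw [show (∑ i : Fin (m+1), if π (i+1) < π i then (1:ℕ) else 0)
      = ∑ i : Fin (m+1), F π i.val from
    Finset.sum_congr rfl (fun i _ => by simp [F, i.isLt])]
  exact Fin.sum_univ_eq_sum_range (F π) (m+1)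

lemma fin_add_one_of_lt {s : ℕ} (h : s < m) :
    (⟨s, by omega⟩ : Fin (m+1)) + 1 = ⟨s+1, by omega⟩ := by
  apply Fin.ext
  simp [Fin.add_def, Nat.mod_eq_of_lt (by omega : s + 1 < m + 1)]

lemma F_of_lt (π : Perm (Fin (m+1))) {s : ℕ} (h : s < m) :
    F π s = if aval (m+1) π (s+1) < aval (m+1) π s then 1 else 0 := by
  rw [F, dif_pos (by omega : s < m+1), fin_add_one_of_lt h]
  simp only [aval, dif_pos (by omega : s < m+1), dif_pos (by omega : s+1 < m+1)]
  rfl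

lemma F_last (π : Perm (Fin (m+1))) :
    F π m = if (π 0 : ℕ) < (π (Fin.last m) : ℕ) then 1 else 0 := by
  rw [F, dif_pos (by omega : m < m+1)]
  have h1 : (⟨m, by omega⟩ : Fin (m+1)) + 1 = 0 := by
    apply Fin.ext; simp [Fin.add_def]
  have h2 : (⟨m, by omega⟩ : Fin (m+1)) = Fin.last m := rfl
  rw [h1, h2]
  rfl

/-- `cdesA` agrees with the wraparound count `cdF`. -/
lemma cdesA_eq_cdF (π : Perm (Fin (m+1))) :
    cdesA (m+1) π = cdF π := by
  rw [cdF_eq_sum, Finset.sum_range_succ, F_last]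
  rw [Finset.sum_congr rfl (fun s hs => F_of_lt π (Finset.mem_range.mp hs))]
  have h2 : ∑ s ∈ Finset.range m, (if aval (m+1) π (s+1) < aval (m+1) π s then (1:ℕ) else 0)
      = desA (m+1) π := by
    rw [desA, desSetA, Finset.card_filter]
    congr 1
  rw [h2, cdesA]
  congr 1
  have h3 : (m+1) - 1 = m := by omega
  rw [h3]
  simp only [aval, dif_pos (by omega : (0:ℕ) < m+1), dif_pos (by omega : m < m+1)]
  rfl

/-- Cyclic descents are invariant under rotating positions. -/
lemma cdF_rot (π : Perm (Fin (m+1))) (k : Fin (m+1)) :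
    cdF ((Equiv.addRight k).trans π) = cdF π := by
  unfold cdF
  apply Finset.card_bij' (fun i _ => i + k) (fun j _ => j - k)
  · intro i hi
    simp only [Finset.mem_filter] at hi
    simp only [Finset.mem_filter, Finset.mem_univ, true_and, Equiv.trans_apply,
      Equiv.coe_addRight] at hi ⊢
    rwa [show i + 1 + k = i + k + 1 from by abel] at hi
  · intro j hj
    simp only [Finset.mem_filter]
    simp only [Finset.mem_filter, Finset.mem_univ, true_and, Equiv.trans_apply,
      Equiv.coe_addRight] at hj ⊢
    have h1 : j - k + k = j := by abel
    have h2 : j - k + 1 + k = j + 1 := by abel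
    rw [h1, h2]
    exact hj
  · intro i _; abel
  · intro j _; abel

def Phi0 (p : Fin (m+1) × Perm (Fin m)) : Perm (Fin (m+1)) :=
  (Equiv.addRight p.1).trans (wP p.2)

lemma Phi0_injective : Function.Injective (Phi0 (m := m)) := by
  rintro ⟨k, σ⟩ ⟨k', σ'⟩ h
  have happ : ∀ i, wP σ (i + k) = wP σ' (i + k') := by
    intro i
    have := congrArg (fun e : Perm (Fin (m+1)) => e i) h
    simpa [Phi0] using this
  have hk : k = k' := by
    have h1 := happ (Fin.last m - k)
    rw [sub_add_cancel, wP_last] at h1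
    have h2 : Fin.last m - k + k' = Fin.last m :=
      (wP σ').injective (h1.symm.trans (wP_last σ').symm)
    have h3 : Fin.last m - k + k = Fin.last m := sub_add_cancel _ _
    exact (add_left_cancel (h3.trans h2.symm) : k = k')
  subst hk
  have hw : ∀ j, σ j = σ' j := by
    intro j
    have := happ (j.castSucc - k)
    rw [sub_add_cancel] at this
    rw [wP_castSucc, wP_castSucc] at this
    exact Fin.castSucc_injective _ this
  simp only [Prod.mk.injEq, true_and]
  exact Equiv.ext hw

/-- The rotation bijection `S_{m+1} ≃ [m+1] × S_m`. -/
noncomputable def Phi : (Fin (m+1) × Perm (Fin m)) ≃ Perm (Fin (m+1)) :=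
  Equiv.ofBijective Phi0 ((Fintype.bijective_iff_injective_and_card _).mpr
    ⟨Phi0_injective, by simp [Fintype.card_perm, Nat.factorial_succ]⟩)

lemma card_filter_equiv {α β : Type*} [Fintype α] [Fintype β] (e : α ≃ β)
    (P : β → Prop) [DecidablePred P] :
    (univ.filter (fun a => P (e a))).card = (univ.filter P).card := by
  apply Finset.card_bij' (fun a _ => e a) (fun b _ => e.symm b)
  · intro a ha; simp_all
  · intro b hb; simp_all
  · intro a _; simp
  · intro b _; simp

lemma card_filter_snd {α β : Type*} [Fintype α] [Fintype β]
    (Q : β → Prop) [DecidablePred Q] :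
    (univ.filter (fun p : α × β => Q p.2)).card
      = Fintype.card α * (univ.filter Q).card := by
  have h : univ.filter (fun p : α × β => Q p.2) = univ ×ˢ univ.filter Q := by
    ext p; simp [Finset.mem_product]
  rw [h, Finset.card_product, Finset.card_univ]

end aux

section keylemma
open Equiv
variable {l : ℕ}

/-- The word `σ(0) ⋯ σ(m-1) m` has cyclic descent number `des σ + 1`. -/
lemma cdF_wP (σ : Perm (Fin (l+1))) :
    cdF (wP σ) = desA (l+1) σ + 1 := by
  rw [cdF_eq_sum, Finset.sum_range_succ, Finset.sum_range_succ]
  have hlast : F (wP σ) (l+1) = 1 := by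
    rw [F, dif_pos (by omega : l+1 < l+1+1)]
    have h0 : (⟨l+1, by omega⟩ : Fin (l+2)) = Fin.last (l+1) := rfl
    have h1 : (⟨l+1, by omega⟩ : Fin (l+2)) + 1 = 0 := by
      apply Fin.ext; simp [Fin.add_def]
    rw [h1, h0, wP_last]
    rw [if_pos]
    have h2 : (0 : Fin (l+2)) = (0 : Fin (l+1)).castSucc := rfl
    rw [h2, wP_castSucc]
    exact Fin.castSucc_lt_last _
  have hl : F (wP σ) l = 0 := by
    rw [F, dif_pos (by omega : l < l+1+1)]
    rw [fin_add_one_of_lt (by omega : l < l+1)]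
    have h0 : (⟨l+1, by omega⟩ : Fin (l+2)) = Fin.last (l+1) := rfl
    rw [h0, wP_last, if_neg]
    exact not_lt.mpr (Fin.le_last _)
  rw [hlast, hl]
  have hmain : ∀ s ∈ Finset.range l, F (wP σ) s
      = if aval (l+1) σ (s+1) < aval (l+1) σ s then 1 else 0 := by
    intro s hs
    rw [Finset.mem_range] at hs
    rw [F, dif_pos (by omega : s < l+1+1)]
    rw [fin_add_one_of_lt (by omega : s < l+1)]
    have hc : ∀ (t : ℕ) (ht : t < l+1),
        (⟨t, by omega⟩ : Fin (l+2)) = (⟨t, ht⟩ : Fin (l+1)).castSucc := by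
      intro t ht; rfl
    rw [hc s (by omega), hc (s+1) (by omega), wP_castSucc, wP_castSucc]
    rw [show aval (l+1) σ (s+1) = ((σ ⟨s+1, by omega⟩ : Fin (l+1)) : ℕ) from dif_pos (by omega),
        show aval (l+1) σ s = ((σ ⟨s, by omega⟩ : Fin (l+1)) : ℕ) from dif_pos (by omega)]
    exact if_congr (by rw [Fin.castSucc_lt_castSucc_iff]; exact Fin.lt_iff_val_lt_val) rfl rfl
  rw [Finset.sum_congr rfl hmain]
  have : desA (l+1) σ
      = ∑ s ∈ Finset.range l, (if aval (l+1) σ (s+1) < aval (l+1) σ s then 1 else 0) := by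
    rw [desA, desSetA, Finset.card_filter]
    congr 1
  omega

end keylemma

/-- The number of permutations of `[n]` with exactly `d` cyclic descents equals
`n` times the number of permutations of `[n-1]` with exactly `d-1` ordinary descents,
i.e. the cyclic Eulerian polynomial satisfies `A_n^{(c)}(t) = n * A_{n-1}(t)`. -/
theorem cyclic_eulerian (n : ℕ) (hn : 2 ≤ n) (d : ℕ) :
    (Finset.univ.filter (fun π : Equiv.Perm (Fin n) => cdesA n π = d)).card
      = n * (Finset.univ.filter
          (fun π : Equiv.Perm (Fin (n - 1)) => desA (n - 1) π + 1 = d)).card := by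
  obtain ⟨l, rfl⟩ : ∃ l, n = l + 2 := ⟨n - 2, by omega⟩
  have hm : l + 2 - 1 = l + 1 := rfl
  rw [hm]
  have hkey : ∀ p : Fin (l+2) × Equiv.Perm (Fin (l+1)),
      cdesA (l+2) (Phi p) = desA (l+1) p.2 + 1 := by
    rintro ⟨k, σ⟩
    have h0 : Phi (k, σ) = (Equiv.addRight k).trans (wP σ) := rfl
    rw [cdesA_eq_cdF, h0, cdF_rot, cdF_wP]
  calc (Finset.univ.filter (fun π : Equiv.Perm (Fin (l+2)) => cdesA (l+2) π = d)).card
      = (Finset.univ.filter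
          (fun p : Fin (l+2) × Equiv.Perm (Fin (l+1)) => cdesA (l+2) (Phi p) = d)).card :=
        (card_filter_equiv Phi _).symm
    _ = (Finset.univ.filter
          (fun p : Fin (l+2) × Equiv.Perm (Fin (l+1)) => desA (l+1) p.2 + 1 = d)).card := by
        apply Finset.card_bij (fun p _ => p)
        · intro p hp
          simp only [Finset.mem_filter, Finset.mem_univ, true_and, hkey p] at hp ⊢
          exact hp
        · intro p q _ _ h; exact h
        · intro p hp
          refine ⟨p, ?_, rfl⟩
          simp only [Finset.mem_filter, Finset.mem_univ, true_and, hkey p] at hp ⊢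
          exact hp
    _ = (l+2) * (Finset.univ.filter
          (fun σ : Equiv.Perm (Fin (l+1)) => desA (l+1) σ + 1 = d)).card := by
        have h := card_filter_snd (α := Fin (l+2))
          (fun σ : Equiv.Perm (Fin (l+1)) => desA (l+1) σ + 1 = d)
        rw [Fintype.card_fin] at h
        convert h using 2
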